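/- Let a be a list of length L ≥ 1 of positive integers containing exactly k entries equal to 1, and let n_1,…,n_{k+1} be the lengths of the (possibly empty) segments of a delimited by the entries equal to 1, from left to right. Then for each j with 1 ≤ j ≤ k+1, the j-th tree of the canonical decoded forest decode(a) has exactly n_j + 1 leaves; consequently decode(a) has (n_1+1) + … + (n_{k+1}+1) = L + 1 leaves in total. (This is the leaf-count claim in the decoding construction of the proof of Theorem 1(2).) -/

import Mathlib

/-- A rooted plane tree: a node carrying a finite ordered list of child subtrees.
A node with no children is a leaf. -/
inductive PTree : Type where
  | node : List PTree → PTree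

namespace PTree

mutual
/-- Number of leaves of a plane tree. -/
def leaves : PTree → ℕ
  | .node [] => 1
  | .node (c :: cs) => c.leaves + leavesList cs

/-- Total number of leaves of a list of plane trees. -/
def leavesList : List PTree → ℕ
  | [] => 0
  | c :: cs => c.leaves + leavesList cs
end

mutual
/-- Height of a plane tree (a single leaf has height 1). -/
def height : PTree → ℕ
  | .node [] => 1
  | .node (c :: cs) => 1 + max c.height (heightList cs)

/-- Maximum height among a list of plane trees (0 for the empty list). -/
def heightList : List PTree → ℕ
  | [] => 0
  | c :: cs => max c.height (heightList cs)
end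

mutual
/-- Separation levels between consecutive leaves inside a tree whose root is at level `l`:
between two consecutive leaves lying in distinct children we record `l+1`
(one more than the level of their lowest common ancestor, which is the root). -/
def enc : PTree → ℕ → List ℕ
  | .node [], _ => []
  | .node (c :: cs), l => c.enc (l + 1) ++ encList cs (l + 1)

/-- Separation levels for a list of sibling subtrees all at level `l`, including
the separator `l` between consecutive subtrees. -/
def encList : List PTree → ℕ → List ℕ
  | [], _ => []
  | c :: cs, l => (l :: c.enc l) ++ encList cs l
end

end PTree

/-- Total number of leaves of a plane forest. -/
def forestLeaves (F : List PTree) : ℕ := PTree.leavesList F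

/-- Height of a plane forest: the maximum level of any of its nodes (roots are at level 1). -/
def forestHeight (F : List PTree) : ℕ := PTree.heightList F

/-- The separation array of a plane forest: for each pair of consecutive leaves
(numbered left to right), the level at which they separate (`1` if they lie in
different trees, and `1 +` the level of their lowest common ancestor otherwise). -/
def forestSep : List PTree → List ℕ
  | [] => []
  | t :: ts => t.enc 1 ++ PTree.encList ts 1

/-- Maximum entry of a list of naturals (`0` for the empty list). -/
def listMax (a : List ℕ) : ℕ := a.foldr max 0

/-- Split a list at the positions of entries equal to `v`, producing the list of the
(possibly empty) segments delimited by those entries; a list containing `k` occurrences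
of `v` yields `k + 1` segments, in left-to-right order. -/
def splitSep (v : ℕ) : List ℕ → List (List ℕ)
  | [] => [[]]
  | x :: xs =>
    match splitSep v xs with
    | [] => [[]]
    | r :: rs => if x = v then [] :: r :: rs else (x :: r) :: rs

theorem splitSep_ne_nil (v : ℕ) (s : List ℕ) : splitSep v s ≠ [] := by
  cases s with
  | nil => simp [splitSep]
  | cons x xs =>
    simp only [splitSep]
    cases h : splitSep v xs with
    | nil => simp
    | cons r rs => by_cases hxv : x = v <;> simp [hxv]

theorem listMax_le_of_mem_splitSep {v : ℕ} {s s' : List ℕ} (h : s' ∈ splitSep v s) :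
    listMax s' ≤ listMax s := by
  induction s generalizing s' with
  | nil =>
    simp only [splitSep, List.mem_singleton] at h
    subst h; exact le_rfl
  | cons x xs ih =>
    simp only [splitSep] at h
    cases hs : splitSep v xs with
    | nil => exact absurd hs (splitSep_ne_nil v xs)
    | cons r rs =>
      rw [hs] at h
      have hr : r ∈ splitSep v xs := by rw [hs]; exact List.mem_cons_self
      by_cases hxv : x = v
      · simp only [if_pos hxv, List.mem_cons] at h
        rcases h with h | h | h
        · subst h; simp [listMax]
        · subst h
          exact le_trans (ih hr) (by simp [listMax, le_max_iff, le_refl, or_true])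
        · have : s' ∈ splitSep v xs := by rw [hs]; exact List.mem_cons_of_mem _ h
          exact le_trans (ih this) (by simp [listMax, le_max_iff, le_refl, or_true])
      · simp only [if_neg hxv, List.mem_cons] at h
        rcases h with h | h
        · subst h
          have := ih hr
          simp only [listMax, List.foldr] at *
          omega
        · have : s' ∈ splitSep v xs := by rw [hs]; exact List.mem_cons_of_mem _ h
          have := ih this
          simp only [listMax, List.foldr] at *
          omega

/-- The canonical decoding `T(s, l)` of a list `s` (all of whose entries are intended to
be strictly greater than `l`) into a plane tree rooted at level `l`: the empty list
decodes to a single leaf, and otherwise the children are obtained by decoding, at level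
`l + 1`, the segments of `s` delimited by the entries equal to `l + 1`. -/
def decodeT (s : List ℕ) (l : ℕ) : PTree :=
  if h : s = [] ∨ listMax s ≤ l then .node []
  else .node ((splitSep (l + 1) s).attach.map (fun x => decodeT x.1 (l + 1)))
termination_by listMax s + 1 - l
decreasing_by
  have h1 : listMax x.1 ≤ listMax s := listMax_le_of_mem_splitSep x.2
  push_neg at h
  omega

/-- The canonical decoded forest of a list `a`: decode, as trees rooted at level `1`,
the segments of `a` delimited by the entries equal to `1`. -/
def decode (a : List ℕ) : List PTree := (splitSep 1 a).map (fun s => decodeT s 1)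


lemma mem_of_mem_splitSep {v x : ℕ} {s s' : List ℕ} (h : s' ∈ splitSep v s) (hx : x ∈ s') :
    x ∈ s ∧ x ≠ v := by
  induction s generalizing s' with
  | nil =>
    simp only [splitSep, List.mem_singleton] at h
    subst h; simp at hx
  | cons y ys ih =>
    simp only [splitSep] at h
    cases hs : splitSep v ys with
    | nil => exact absurd hs (splitSep_ne_nil v ys)
    | cons r rs =>
      rw [hs] at h
      by_cases hyv : y = v
      · simp only [if_pos hyv, List.mem_cons] at h
        rcases h with h | h | h
        · subst h; simp at hx
        · have := ih (by rw [hs]; exact List.mem_cons_self) (h ▸ hx)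
          exact ⟨List.mem_cons_of_mem _ this.1, this.2⟩
        · have := ih (by rw [hs]; exact List.mem_cons_of_mem _ h) hx
          exact ⟨List.mem_cons_of_mem _ this.1, this.2⟩
      · simp only [if_neg hyv, List.mem_cons] at h
        rcases h with h | h
        · subst h
          rcases List.mem_cons.mp hx with h | h
          · subst h; exact ⟨List.mem_cons_self, hyv⟩
          · have := ih (by rw [hs]; exact List.mem_cons_self) h
            exact ⟨List.mem_cons_of_mem _ this.1, this.2⟩
        · have := ih (by rw [hs]; exact List.mem_cons_of_mem _ h) hx
          exact ⟨List.mem_cons_of_mem _ this.1, this.2⟩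

lemma splitSep_length (v : ℕ) (s : List ℕ) :
    (splitSep v s).length = s.count v + 1 := by
  induction s with
  | nil => simp [splitSep]
  | cons y ys ih =>
    simp only [splitSep]
    cases hs : splitSep v ys with
    | nil => exact absurd hs (splitSep_ne_nil v ys)
    | cons r rs =>
      rw [hs] at ih
      by_cases hyv : y = v
      · simp [hyv, List.count_cons, ih]
      · simp only [List.length_cons] at ih
        simp [List.count_cons, hyv]
        omega

lemma splitSep_sum_length (v : ℕ) (s : List ℕ) :
    ((splitSep v s).map List.length).sum + s.count v = s.length := by
  induction s with
  | nil => simp [splitSep]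
  | cons y ys ih =>
    simp only [splitSep]
    cases hs : splitSep v ys with
    | nil => exact absurd hs (splitSep_ne_nil v ys)
    | cons r rs =>
      rw [hs] at ih
      by_cases hyv : y = v
      · simp only [if_pos hyv, List.map_cons, List.sum_cons, List.count_cons, hyv,
          List.length_cons] at *
        simp at ih ⊢
        omega
      · simp only [if_neg hyv, List.map_cons, List.sum_cons, List.count_cons,
          List.length_cons] at *
        simp [hyv] at ih ⊢
        omega

lemma leavesList_eq_sum (ts : List PTree) :
    PTree.leavesList ts = (ts.map PTree.leaves).sum := by
  induction ts with
  | nil => rfl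
  | cons t ts ih => simp [PTree.leavesList, ih]

lemma leaves_node_ne_nil {ts : List PTree} (h : ts ≠ []) :
    (PTree.node ts).leaves = PTree.leavesList ts := by
  cases ts with
  | nil => exact absurd rfl h
  | cons t ts => simp [PTree.leaves, PTree.leavesList]

lemma listMax_lt_of_forall {s : List ℕ} {l : ℕ} (hne : s ≠ []) (h : ∀ x ∈ s, l < x) :
    l < listMax s := by
  cases s with
  | nil => exact absurd rfl hne
  | cons x xs =>
    have := h x (List.mem_cons_self)
    simp only [listMax, List.foldr]
    omega

lemma sum_map_add_one (L : List (List ℕ)) :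
    (L.map (fun s => s.length + 1)).sum = (L.map List.length).sum + L.length := by
  induction L with
  | nil => simp
  | cons r rs ih => simp at ih ⊢; omega

lemma decodeT_leaves (n : ℕ) : ∀ (s : List ℕ) (l : ℕ), listMax s + 1 - l ≤ n →
    (∀ x ∈ s, l < x) → (decodeT s l).leaves = s.length + 1 := by
  induction n with
  | zero =>
    intro s l hn h
    cases s with
    | nil => rw [decodeT]; simp [PTree.leaves]
    | cons x xs =>
      have := listMax_lt_of_forall (List.cons_ne_nil x xs) h
      omega
  | succ n ih =>
    intro s l hn h
    by_cases hs : s = [] ∨ listMax s ≤ l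
    · rcases hs with hs | hs
      · subst hs; rw [decodeT]; simp [PTree.leaves]
      · cases s with
        | nil => rw [decodeT]; simp [PTree.leaves]
        | cons x xs =>
          have := listMax_lt_of_forall (List.cons_ne_nil x xs) h
          omega
    · rw [decodeT, dif_neg hs]
      have hsp := splitSep_ne_nil (l + 1) s
      rw [leaves_node_ne_nil (by simp [hsp]), leavesList_eq_sum]
      rw [List.map_map]
      have key : ∀ s' ∈ splitSep (l + 1) s, (decodeT s' (l + 1)).leaves = s'.length + 1 := by
        intro s' hs'
        apply ih
        · have h1 : listMax s' ≤ listMax s := listMax_le_of_mem_splitSep hs'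
          push_neg at hs
          omega
        · intro x hx
          have hm := mem_of_mem_splitSep hs' hx
          have := h x hm.1
          have := hm.2
          omega
      have h5 : ((splitSep (l + 1) s).attach.map
          ((fun t : PTree => t.leaves) ∘ fun x => decodeT x.1 (l + 1)))
          = (splitSep (l + 1) s).attach.map (fun x => x.1.length + 1) := by
        apply List.map_congr_left
        intro x _
        simpa using key x.1 x.2
      rw [h5, List.attach_map_val (l := splitSep (l + 1) s) (f := fun t => t.length + 1), sum_map_add_one]
      have h1 := splitSep_sum_length (l + 1) s
      have h2 := splitSep_length (l + 1) s
      omega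

/-- Let `a` be a list of length `L ≥ 1` of positive integers containing
exactly `k` entries equal to `1`, and let `n_1, …, n_{k+1}` be the lengths of the
(possibly empty) segments of `a` delimited by the entries equal to `1`, from left to
right (i.e. the lengths of the members of `splitSep 1 a`). Then the `j`-th tree of the
canonical decoded forest `decode a` has exactly `n_j + 1` leaves, and consequently
`decode a` has `(n_1 + 1) + … + (n_{k+1} + 1) = L + 1` leaves in total. -/
theorem decode_tree_leaves_eq_segment_length_add_one (a : List ℕ) (hlen : 1 ≤ a.length)
    (hpos : ∀ x ∈ a, 1 ≤ x) :
    (splitSep 1 a).length = a.count 1 + 1 ∧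
    (decode a).length = (splitSep 1 a).length ∧
    (∀ j, j < (decode a).length →
      ((decode a).getD j (PTree.node [])).leaves = ((splitSep 1 a).getD j []).length + 1) ∧
    (((splitSep 1 a).map (fun s => s.length + 1)).sum = a.length + 1 ∧
      forestLeaves (decode a) = a.length + 1) := by
  have hseg : ∀ s' ∈ splitSep 1 a, ∀ x ∈ s', 1 < x := by
    intro s' hs' x hx
    have h := mem_of_mem_splitSep hs' hx
    have := hpos x h.1
    have := h.2
    omega
  have hleaves : ∀ s' ∈ splitSep 1 a, (decodeT s' 1).leaves = s'.length + 1 := by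
    intro s' hs'
    exact decodeT_leaves (listMax s' + 1 - 1) s' 1 le_rfl (hseg s' hs')
  have hlen2 : (decode a).length = (splitSep 1 a).length := by
    simp [decode]
  have hsum : ((splitSep 1 a).map (fun s => s.length + 1)).sum = a.length + 1 := by
    rw [sum_map_add_one, splitSep_length]
    have := splitSep_sum_length 1 a
    omega
  refine ⟨splitSep_length 1 a, hlen2, ?_, hsum, ?_⟩
  · intro j hj
    rw [hlen2] at hj
    rw [List.getD_eq_getElem _ _ (by rw [hlen2]; exact hj),
        List.getD_eq_getElem _ _ hj]
    simp only [decode, List.getElem_map]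
    exact hleaves _ (List.getElem_mem _)
  · have : forestLeaves (decode a) = ((decode a).map PTree.leaves).sum := by
      simp [forestLeaves, leavesList_eq_sum]
    rw [this, decode, List.map_map]
    rw [← hsum]
    congr 1
    apply List.map_congr_left
    intro s' hs'
    exact hleaves s' hs'
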